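/- arXiv:1605.02848 — 2 statements merged into one kernel-verified Lean document; each statement's English description precedes it below -/
import Mathlib

section
/- CVaR is subadditive/convex as a functional: for integrable random variables X, Y and θ ∈ [0,1], CVaR_α(θX + (1-θ)Y) ≤ θ CVaR_α(X) + (1-θ) CVaR_α(Y). -/
open MeasureTheory ProbabilityTheory

noncomputable def CVaR {Ω : Type*} [MeasureSpace Ω] (α : ℝ) (X : Ω → ℝ) : ℝ :=
  ⨅ u : ℝ, u + (1 - α)⁻¹ * ∫ ω, max (X ω - u) 0

lemma cvar_obj_lb {Ω : Type*} [MeasureSpace Ω] [IsProbabilityMeasure (ℙ : Measure Ω)]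
    (X : Ω → ℝ) (hX : Integrable X) (α : ℝ) (hα : α ∈ Set.Ioo (0 : ℝ) 1) (u : ℝ) :
    ∫ ω, X ω ≤ u + (1 - α)⁻¹ * ∫ ω, max (X ω - u) 0 := by
  have hc : (1 : ℝ) ≤ (1 - α)⁻¹ := by
    rw [le_inv_comm₀ one_pos (by linarith [hα.1, hα.2])]; simp; linarith [hα.1]
  have hint : Integrable (fun ω => max (X ω - u) 0) := (hX.sub (integrable_const u)).pos_part
  have h0 : 0 ≤ ∫ ω, max (X ω - u) 0 := integral_nonneg fun ω => le_max_right _ _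
  have h1 : (∫ ω, X ω) - u ≤ ∫ ω, max (X ω - u) 0 := by
    have := integral_mono (f := fun ω => X ω - u) (g := fun ω => max (X ω - u) 0)
      (hX.sub (integrable_const u)) hint (fun ω => le_max_left (X ω - u) 0)
    rwa [integral_sub hX (integrable_const u), integral_const, probReal_univ,
      smul_eq_mul, one_mul] at this
  rcases le_total (∫ ω, X ω) u with h | h
  · nlinarith
  · nlinarith

/-- CVaR is convex as a functional on random variables. -/
theorem cvar_convex
    {Ω : Type*} [MeasureSpace Ω] [IsProbabilityMeasure (ℙ : Measure Ω)]
    (X Y : Ω → ℝ) (hX : Integrable X) (hY : Integrable Y)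
    (θ : ℝ) (hθ : θ ∈ Set.Icc (0 : ℝ) 1)
    (α : ℝ) (hα : α ∈ Set.Ioo (0 : ℝ) 1) :
    CVaR α (fun ω => θ * X ω + (1 - θ) * Y ω) ≤ θ * CVaR α X + (1 - θ) * CVaR α Y := by
  obtain ⟨hθ0, hθ1⟩ := hθ
  have hθ1' : (0:ℝ) ≤ 1 - θ := by linarith
  have hc : (0 : ℝ) < (1 - α)⁻¹ := inv_pos.mpr (by linarith [hα.2])
  unfold CVaR
  rw [Real.mul_iInf_of_nonneg hθ0, Real.mul_iInf_of_nonneg hθ1']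
  refine le_ciInf_add_ciInf fun u v => ?_
  have hbdd : BddBelow (Set.range fun w : ℝ =>
      w + (1 - α)⁻¹ * ∫ ω, max ((fun ω => θ * X ω + (1 - θ) * Y ω) ω - w) 0) :=
    ⟨∫ ω, (θ * X ω + (1 - θ) * Y ω), Set.forall_mem_range.mpr fun w =>
      cvar_obj_lb _ ((hX.const_mul θ).add (hY.const_mul (1 - θ))) α hα w⟩
  refine le_trans (ciInf_le hbdd (θ * u + (1 - θ) * v)) ?_
  have hintX : Integrable (fun ω => max (X ω - u) 0) := (hX.sub (integrable_const u)).pos_part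
  have hintY : Integrable (fun ω => max (Y ω - v) 0) := (hY.sub (integrable_const v)).pos_part
  have hintZ : Integrable (fun ω => θ * max (X ω - u) 0 + (1 - θ) * max (Y ω - v) 0) :=
    (hintX.const_mul θ).add (hintY.const_mul (1 - θ))
  have hintW : Integrable (fun ω => max (θ * X ω + (1 - θ) * Y ω - (θ * u + (1 - θ) * v)) 0) :=
    (((hX.const_mul θ).add (hY.const_mul (1 - θ))).sub (integrable_const _)).pos_part
  have hmono : ∫ ω, max (θ * X ω + (1 - θ) * Y ω - (θ * u + (1 - θ) * v)) 0
      ≤ ∫ ω, (θ * max (X ω - u) 0 + (1 - θ) * max (Y ω - v) 0) := by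
    refine integral_mono hintW hintZ fun ω => ?_
    have h1 : θ * (X ω - u) ≤ θ * max (X ω - u) 0 := by
      exact mul_le_mul_of_nonneg_left (le_max_left _ _) hθ0
    have h2 : (1 - θ) * (Y ω - v) ≤ (1 - θ) * max (Y ω - v) 0 := by
      exact mul_le_mul_of_nonneg_left (le_max_left _ _) hθ1'
    have h3 : 0 ≤ θ * max (X ω - u) 0 + (1 - θ) * max (Y ω - v) 0 := by positivity
    rw [max_le_iff]
    constructor
    · nlinarith
    · exact h3
  calc θ * u + (1 - θ) * v + (1 - α)⁻¹ * ∫ ω, max (θ * X ω + (1 - θ) * Y ω - (θ * u + (1 - θ) * v)) 0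
      ≤ θ * u + (1 - θ) * v + (1 - α)⁻¹ * ∫ ω, (θ * max (X ω - u) 0 + (1 - θ) * max (Y ω - v) 0) := by
        gcongr
    _ = θ * (u + (1 - α)⁻¹ * ∫ ω, max (X ω - u) 0) + (1 - θ) * (v + (1 - α)⁻¹ * ∫ ω, max (Y ω - v) 0) := by
        rw [integral_add (hintX.const_mul θ) (hintY.const_mul (1 - θ)),
          integral_const_mul, integral_const_mul]; ring
end

section
/- Conditional tail expectation of a nonincreasing transform: let ψ be a real random variable with continuous strictly increasing CDF, h : ℝ → ℝ nonincreasing and integrable against the law of ψ. Then the map α ↦ E[h(ψ) | ψ ≥ VaR_α(ψ)] is nonincreasing, and E[h(ψ) | ψ ≥ VaR_α(ψ)] ≤ E[h(ψ)] for all α ∈ (0,1). -/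
open MeasureTheory ProbabilityTheory

noncomputable def VaR {Ω : Type*} [MeasureSpace Ω] (α : ℝ) (ψ : Ω → ℝ) : ℝ :=
  sInf {u : ℝ | α < (ℙ {ω | ψ ω ≤ u}).toReal}

/-- Conditional tail expectation of the tail event. -/
noncomputable def tailCondExp {Ω : Type*} [MeasureSpace Ω]
    (α : ℝ) (ψ : Ω → ℝ) (h : ℝ → ℝ) : ℝ :=
  (∫ ω in {ω | VaR α ψ ≤ ψ ω}, h (ψ ω)) / (ℙ {ω | VaR α ψ ≤ ψ ω}).toReal

section Aux

open Set Filter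

private lemma aux_div (A B p q c : ℝ) (hp : 0 < p) (hq : 0 ≤ q)
    (hA : A ≤ c * p) (hB : c * q ≤ B) : A / p ≤ (A + B) / (p + q) := by
  rw [div_le_div_iff₀ hp (by linarith)]
  nlinarith

variable {Ω : Type*} [MeasureSpace Ω] [IsProbabilityMeasure (ℙ : Measure Ω)]
  {ψ : Ω → ℝ}

/-- the tail probability equals `1 - F v`. -/
private lemma meas_tail (hψ : Measurable ψ)
    (hcdf_cont : Continuous fun u : ℝ => (ℙ {ω | ψ ω ≤ u}).toReal) (v : ℝ) :
    (ℙ {ω | v ≤ ψ ω}).toReal = 1 - (ℙ {ω | ψ ω ≤ v}).toReal := by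
  have hlt : (ℙ {ω | ψ ω < v}).toReal = (ℙ {ω | ψ ω ≤ v}).toReal := by
    apply le_antisymm
    · exact ENNReal.toReal_mono (measure_ne_top _ _)
        (measure_mono (Set.setOf_subset_setOf.mpr fun ω hω => le_of_lt hω))
    · have ht : Tendsto (fun u : ℝ => (ℙ {ω | ψ ω ≤ u}).toReal) (nhdsWithin v (Iio v))
          (nhds ((ℙ {ω | ψ ω ≤ v}).toReal)) :=
        (hcdf_cont.tendsto v).mono_left nhdsWithin_le_nhds
      refine le_of_tendsto ht ?_
      filter_upwards [self_mem_nhdsWithin] with u hu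
      exact ENNReal.toReal_mono (measure_ne_top _ _)
        (measure_mono (Set.setOf_subset_setOf.mpr fun ω hω => lt_of_le_of_lt hω hu))
  have hc : {ω | v ≤ ψ ω} = {ω | ψ ω < v}ᶜ := by
    ext ω; simp [not_lt]
  have hcompl := measure_compl (μ := (ℙ : Measure Ω)) (s := {ω | ψ ω < v})
    (hψ measurableSet_Iio) (measure_ne_top _ _)
  rw [hc, hcompl, measure_univ,
    ENNReal.toReal_sub_of_le prob_le_one ENNReal.one_ne_top, ENNReal.toReal_one, hlt]

/-- VaR of the unique quantile. -/
private lemma VaR_eq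
    (hcdf_sm : StrictMono fun u : ℝ => (ℙ {ω | ψ ω ≤ u}).toReal)
    {α u₀ : ℝ} (hu : (ℙ {ω | ψ ω ≤ u₀}).toReal = α) : VaR α ψ = u₀ := by
  have : {u : ℝ | α < (ℙ {ω | ψ ω ≤ u}).toReal} = Ioi u₀ := by
    ext u
    simp only [Set.mem_setOf_eq, Set.mem_Ioi, ← hu]
    exact hcdf_sm.lt_iff_lt
  rw [VaR, this, csInf_Ioi]

/-- surjectivity of the CDF onto (0,1). -/
private lemma exists_F_eq (hψ : Measurable ψ)
    (hcdf_cont : Continuous fun u : ℝ => (ℙ {ω | ψ ω ≤ u}).toReal)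
    {α : ℝ} (hα : α ∈ Ioo (0 : ℝ) 1) :
    ∃ u : ℝ, (ℙ {ω | ψ ω ≤ u}).toReal = α := by
  set F : ℝ → ℝ := fun u => (ℙ {ω | ψ ω ≤ u}).toReal with hF
  set μ : Measure ℝ := Measure.map ψ ℙ with hμ
  have : IsProbabilityMeasure μ := Measure.isProbabilityMeasure_map hψ.aemeasurable
  have hFc : ∀ u, F u = cdf μ u := by
    intro u
    rw [cdf_eq_real, Measure.real, hμ, Measure.map_apply hψ measurableSet_Iic]
    rfl
  obtain ⟨u₁, hu₁⟩ := ((tendsto_cdf_atBot (μ := μ)).eventually_lt_const hα.1).exists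
  obtain ⟨u₂, hu₂⟩ := ((tendsto_cdf_atTop (μ := μ)).eventually_const_lt hα.2).exists
  rw [← hFc] at hu₁ hu₂
  have hmono : Monotone F := fun a b hab =>
    ENNReal.toReal_mono (measure_ne_top _ _)
      (measure_mono (Set.setOf_subset_setOf.mpr fun ω hω => le_trans hω hab))
  have h12 : u₁ ≤ u₂ := by
    by_contra hcon
    exact absurd (hmono (le_of_not_ge hcon)) (not_le.mpr (hu₁.trans hu₂))
  have := intermediate_value_Icc h12 hcdf_cont.continuousOn
  obtain ⟨u, _, hu⟩ := this ⟨hu₁.le, hu₂.le⟩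
  exact ⟨u, hu⟩

/-- ratio monotonicity in the cut point. -/
private lemma tail_ratio_mono (hψ : Measurable ψ) (hh : Antitone h)
    (hint : Integrable fun ω => h (ψ ω)) {v v' : ℝ} (hvv' : v ≤ v')
    (hp : 0 < (ℙ {ω | v' ≤ ψ ω}).toReal) :
    (∫ ω in {ω | v' ≤ ψ ω}, h (ψ ω)) / (ℙ {ω | v' ≤ ψ ω}).toReal ≤
    (∫ ω in {ω | v ≤ ψ ω}, h (ψ ω)) / (ℙ {ω | v ≤ ψ ω}).toReal := by
  set S' : Set Ω := {ω | v' ≤ ψ ω} with hS'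
  set M : Set Ω := {ω | v ≤ ψ ω ∧ ψ ω < v'} with hM
  have hS'm : MeasurableSet S' := hψ measurableSet_Ici
  have hMm : MeasurableSet M := (hψ measurableSet_Ici).inter (hψ measurableSet_Iio)
  have hdisj : Disjoint M S' := by
    rw [Set.disjoint_left]
    rintro ω ⟨_, h2⟩ h3
    exact absurd h3 (not_le.mpr h2)
  have hunion : M ∪ S' = {ω | v ≤ ψ ω} := by
    ext ω
    constructor
    · rintro (⟨h1, _⟩ | h1)
      · exact h1
      · exact le_trans hvv' h1
    · intro h1
      rcases lt_or_ge (ψ ω) v' with h2 | h2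
      · exact Or.inl ⟨h1, h2⟩
      · exact Or.inr h2
  have hIint : ∫ ω in {ω | v ≤ ψ ω}, h (ψ ω) =
      (∫ ω in M, h (ψ ω)) + ∫ ω in S', h (ψ ω) := by
    rw [← hunion, setIntegral_union hdisj hS'm hint.integrableOn hint.integrableOn]
  have hMeas : (ℙ {ω | v ≤ ψ ω}).toReal = (ℙ M).toReal + (ℙ S').toReal := by
    rw [← hunion, measure_union hdisj hS'm,
      ENNReal.toReal_add (measure_ne_top _ _) (measure_ne_top _ _)]
  have hA : ∫ ω in S', h (ψ ω) ≤ h v' * (ℙ S').toReal := by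
    have := setIntegral_mono_on hint.integrableOn
      (integrableOn_const (measure_ne_top _ _)) hS'm
      (fun ω hω => hh (hω : v' ≤ ψ ω))
    rwa [setIntegral_const, smul_eq_mul, mul_comm] at this
  have hB : h v' * (ℙ M).toReal ≤ ∫ ω in M, h (ψ ω) := by
    have := setIntegral_mono_on
      (integrableOn_const (measure_ne_top _ _)) hint.integrableOn hMm
      (fun ω hω => hh (le_of_lt hω.2))
    rwa [setIntegral_const, smul_eq_mul, mul_comm] at this
  rw [hIint, hMeas, add_comm (∫ ω in M, h (ψ ω)) (∫ ω in S', h (ψ ω)),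
    add_comm (ℙ M).toReal (ℙ S').toReal]
  exact aux_div (∫ ω in S', h (ψ ω)) (∫ ω in M, h (ψ ω)) (ℙ S').toReal (ℙ M).toReal
    (h v') hp ENNReal.toReal_nonneg hA hB

/-- the tail conditional expectation is at most the mean. -/
private lemma tail_le_mean (hψ : Measurable ψ) (hh : Antitone h)
    (hint : Integrable fun ω => h (ψ ω)) {v : ℝ}
    (hp : 0 < (ℙ {ω | v ≤ ψ ω}).toReal) :
    (∫ ω in {ω | v ≤ ψ ω}, h (ψ ω)) / (ℙ {ω | v ≤ ψ ω}).toReal ≤ ∫ ω, h (ψ ω) := by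
  set S : Set Ω := {ω | v ≤ ψ ω} with hS
  set M : Set Ω := {ω | ψ ω < v} with hM
  have hMm : MeasurableSet M := hψ measurableSet_Iio
  have hSm : MeasurableSet S := hψ measurableSet_Ici
  have hc : S = Mᶜ := by ext ω; simp [hS, hM, not_lt]
  have hIint : ∫ ω, h (ψ ω) = (∫ ω in M, h (ψ ω)) + ∫ ω in S, h (ψ ω) := by
    rw [hc, integral_add_compl hMm hint]
  have hMeas : (1 : ℝ) = (ℙ M).toReal + (ℙ S).toReal := by
    have := measure_add_measure_compl (μ := (ℙ : Measure Ω)) hMm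
    rw [measure_univ] at this
    rw [hc, ← ENNReal.toReal_add (measure_ne_top _ _) (measure_ne_top _ _), this,
      ENNReal.toReal_one]
  have hA : ∫ ω in S, h (ψ ω) ≤ h v * (ℙ S).toReal := by
    have := setIntegral_mono_on hint.integrableOn
      (integrableOn_const (measure_ne_top _ _)) hSm
      (fun ω hω => hh (hω : v ≤ ψ ω))
    rwa [setIntegral_const, smul_eq_mul, mul_comm] at this
  have hB : h v * (ℙ M).toReal ≤ ∫ ω in M, h (ψ ω) := by
    have := setIntegral_mono_on
      (integrableOn_const (measure_ne_top _ _)) hint.integrableOn hMm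
      (fun ω hω => hh (le_of_lt (hω : ψ ω < v)))
    rwa [setIntegral_const, smul_eq_mul, mul_comm] at this
  have key := aux_div (∫ ω in S, h (ψ ω)) (∫ ω in M, h (ψ ω)) (ℙ S).toReal (ℙ M).toReal
    (h v) hp ENNReal.toReal_nonneg hA hB
  have h1 : (ℙ S).toReal + (ℙ M).toReal = 1 := by linarith
  rw [h1, div_one] at key
  linarith [key, hIint]

end Aux

/-- For a nonincreasing transform h, the conditional tail expectation
    E[h(ψ) | ψ ≥ VaR_α(ψ)] is nonincreasing in α and bounded above by E[h(ψ)]. -/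
theorem tail_condexp_antitone_and_le_mean
    {Ω : Type*} [MeasureSpace Ω] [IsProbabilityMeasure (ℙ : Measure Ω)]
    (ψ : Ω → ℝ) (hψ : Measurable ψ)
    (hcdf_cont : Continuous fun u : ℝ => (ℙ {ω | ψ ω ≤ u}).toReal)
    (hcdf_sm : StrictMono fun u : ℝ => (ℙ {ω | ψ ω ≤ u}).toReal)
    (h : ℝ → ℝ) (hh : Antitone h)
    (hint : Integrable fun ω => h (ψ ω)) :
    (∀ α α' : ℝ, α ∈ Set.Ioo (0 : ℝ) 1 → α' ∈ Set.Ioo (0 : ℝ) 1 → α ≤ α' →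
      tailCondExp α' ψ h ≤ tailCondExp α ψ h) ∧
    (∀ α : ℝ, α ∈ Set.Ioo (0 : ℝ) 1 → tailCondExp α ψ h ≤ ∫ ω, h (ψ ω)) := by
  have hFVaR : ∀ α ∈ Set.Ioo (0 : ℝ) 1,
      (ℙ {ω | ψ ω ≤ VaR α ψ}).toReal = α := by
    intro α hα
    obtain ⟨u, hu⟩ := exists_F_eq hψ hcdf_cont hα
    rw [VaR_eq hcdf_sm hu, hu]
  have htail : ∀ α ∈ Set.Ioo (0 : ℝ) 1,
      (ℙ {ω | VaR α ψ ≤ ψ ω}).toReal = 1 - α := by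
    intro α hα
    rw [meas_tail hψ hcdf_cont, hFVaR α hα]
  constructor
  · intro α α' hα hα' hle
    have hvv' : VaR α ψ ≤ VaR α' ψ := by
      have := hcdf_sm.le_iff_le (a := VaR α ψ) (b := VaR α' ψ)
      rw [hFVaR α hα, hFVaR α' hα'] at this
      exact this.mp hle
    have hp : 0 < (ℙ {ω | VaR α' ψ ≤ ψ ω}).toReal := by
      rw [htail α' hα']; linarith [hα'.2]
    exact tail_ratio_mono hψ hh hint hvv' hp
  · intro α hα
    have hp : 0 < (ℙ {ω | VaR α ψ ≤ ψ ω}).toReal := by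
      rw [htail α hα]; linarith [hα.2]
    exact tail_le_mean hψ hh hint hp
end
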